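/- Let ψ₀, ψ₁ be an orthonormal basis of ℂ², let 0 ≤ p ≤ 1/2, and let σ = p|ψ₀⟩⟨ψ₀| + (1−p)|ψ₁⟩⟨ψ₁|. Let H be a 2×2 positive semidefinite Hermitian matrix with eigenvalues 0 and ω > 0, and set ε_i = ⟨ψ_i|H|ψ_i⟩ for i = 0,1 (so ε₀ + ε₁ = ω). Then the set of attainable works { Tr[(H − V†HV) σ] : V a 2×2 unitary } is exactly the closed interval [−(1−2p) ε₀, (1−2p) ε₁]. In particular the maximal extractable work (the ergotropy of σ) equals (1−2p) ε₁. -/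

import Mathlib

open Matrix
open scoped ComplexOrder


lemma trace_mul_vmv (A : Matrix (Fin 2) (Fin 2) ℂ) (x y : Fin 2 → ℂ) :
    (A * vecMulVec x y).trace = y ⬝ᵥ (A *ᵥ x) := by
  simp [Matrix.trace, Matrix.mul_apply, Matrix.vecMulVec_apply, dotProduct, Matrix.mulVec,
    Fin.sum_univ_two, Matrix.diag]
  ring

lemma vmv_mul_vmv (x y z w : Fin 2 → ℂ) :
    vecMulVec x y * vecMulVec z w = (y ⬝ᵥ z) • vecMulVec x w := by
  ext i j
  simp [Matrix.mul_apply, Matrix.vecMulVec_apply, dotProduct, Fin.sum_univ_two]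
  ring

lemma vmv_ct (x y : Fin 2 → ℂ) : (vecMulVec x y)ᴴ = vecMulVec (star y) (star x) := by
  ext i j
  simp [Matrix.conjTranspose_apply, Matrix.vecMulVec_apply, mul_comm]

lemma vmv_mulVec (x y z : Fin 2 → ℂ) : vecMulVec x y *ᵥ z = (y ⬝ᵥ z) • x := by
  ext i
  simp [Matrix.mulVec, Matrix.vecMulVec_apply, dotProduct, Fin.sum_univ_two]
  ring

lemma onb_complete (v w : Fin 2 → ℂ) (hvv : star v ⬝ᵥ v = 1) (hww : star w ⬝ᵥ w = 1)
    (hvw : star v ⬝ᵥ w = 0) (hwv : star w ⬝ᵥ v = 0) :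
    vecMulVec v (star v) + vecMulVec w (star w) = 1 := by
  simp only [dotProduct, Fin.sum_univ_two, Pi.star_apply, Complex.star_def] at hvv hww hvw hwv
  have h1 : (Matrix.of ![star v, star w]) * (Matrix.of ![star v, star w])ᴴ = 1 := by
    ext i j
    fin_cases i <;> fin_cases j <;>
      simp [Matrix.mul_apply, Matrix.conjTranspose_apply, Fin.sum_univ_two,
        Matrix.one_apply] <;>
      first
        | linear_combination hvv
        | linear_combination hww
        | linear_combination hvw
        | linear_combination hwv
  have h2 : (Matrix.of ![star v, star w])ᴴ * (Matrix.of ![star v, star w]) = 1 :=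
    mul_eq_one_comm.mp h1
  ext i j
  rw [← h2]
  fin_cases i <;> fin_cases j <;>
    simp [Matrix.mul_apply, Matrix.conjTranspose_apply, Matrix.vecMulVec_apply,
      Fin.sum_univ_two]

lemma sandwich (u x : Fin 2 → ℂ) (V : Matrix (Fin 2) (Fin 2) ℂ) :
    star x ⬝ᵥ ((Vᴴ * vecMulVec u (star u) * V) *ᵥ x)
      = (starRingEnd ℂ) (star u ⬝ᵥ (V *ᵥ x)) * (star u ⬝ᵥ (V *ᵥ x)) := by
  simp [dotProduct, Matrix.mulVec, Matrix.mul_apply, Matrix.vecMulVec_apply,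
    Matrix.conjTranspose_apply, Fin.sum_univ_two, map_add, _root_.map_mul]
  ring

lemma rank_one (H : Matrix (Fin 2) (Fin 2) ℂ) (hH : H.PosSemidef) (ω : ℝ) (hω : 0 < ω)
    (htr : H.trace = (ω : ℂ)) (hdet : H.det = 0) :
    ∃ u : Fin 2 → ℂ, star u ⬝ᵥ u = 1 ∧ H = (ω : ℂ) • vecMulVec u (star u) := by
  have herm := hH.1
  have h10 : H 1 0 = (starRingEnd ℂ) (H 0 1) := by
    conv_lhs => rw [← herm]
    simp [Matrix.conjTranspose_apply]
  have hdiag : ∀ i, 0 ≤ H i i := by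
    intro i
    have := hH.dotProduct_mulVec_nonneg (Pi.single i 1)
    simpa [dotProduct, Matrix.mulVec, Pi.single_apply, Fin.sum_univ_two] using this
  have h00 := hdiag 0; have h11 := hdiag 1
  rw [Complex.nonneg_iff] at h00 h11
  set α : ℝ := (H 0 0).re with hα
  set γ : ℝ := (H 1 1).re with hγ
  have hH00 : H 0 0 = (α : ℂ) := Complex.ext rfl (by simpa using h00.2.symm)
  have hH11 : H 1 1 = (γ : ℂ) := Complex.ext rfl (by simpa using h11.2.symm)
  have htr2 : ((α:ℂ) + γ = (ω:ℂ)) := by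
    rw [Matrix.trace_fin_two, hH00, hH11] at htr; exact htr
  have hdet2 : H 0 1 * (starRingEnd ℂ) (H 0 1) = (α:ℂ) * (γ:ℂ) := by
    rw [Matrix.det_fin_two, hH00, hH11, h10] at hdet
    linear_combination -hdet
  by_cases hα0 : α = 0
  · have hb : H 0 1 = 0 := by
      have h2 : Complex.normSq (H 0 1) = 0 := by
        have h3 := hdet2
        rw [hα0, Complex.mul_conj] at h3
        simpa using h3
      exact Complex.normSq_eq_zero.mp h2
    have hγω : (γ:ℂ) = (ω:ℂ) := by rw [hα0] at htr2; simpa using htr2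
    refine ⟨![0, 1], by simp [dotProduct, Fin.sum_univ_two], ?_⟩
    have e00 : H 0 0 = ((ω:ℂ) • vecMulVec ![0,1] (star ![0,1])) 0 0 := by
      simp [-Matrix.cons_vecMulVec, Matrix.vecMulVec_apply, hH00, hα0]
    have e01 : H 0 1 = ((ω:ℂ) • vecMulVec ![0,1] (star ![0,1])) 0 1 := by
      simp [-Matrix.cons_vecMulVec, Matrix.vecMulVec_apply, hb]
    have e10 : H 1 0 = ((ω:ℂ) • vecMulVec ![0,1] (star ![0,1])) 1 0 := by
      simp [-Matrix.cons_vecMulVec, Matrix.vecMulVec_apply, h10, hb]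
    have e11 : H 1 1 = ((ω:ℂ) • vecMulVec ![0,1] (star ![0,1])) 1 1 := by
      simp [-Matrix.cons_vecMulVec, Matrix.vecMulVec_apply, hH11, hγω]
    ext i j
    fin_cases i <;> fin_cases j
    exacts [e00, e01, e10, e11]
  · have hαpos : 0 < α := lt_of_le_of_ne h00.1 (Ne.symm hα0)
    set b := H 0 1 with hbdef
    set sa : ℂ := ((Real.sqrt α : ℝ) : ℂ) with hsa
    set so : ℂ := ((Real.sqrt ω : ℝ) : ℂ) with hso
    have hsa2 : sa * sa = (α : ℂ) := by
      rw [hsa]; norm_cast; exact Real.mul_self_sqrt hαpos.le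
    have hso2 : so * so = (ω : ℂ) := by
      rw [hso]; norm_cast; exact Real.mul_self_sqrt hω.le
    have hsa0 : sa ≠ 0 := by
      rw [hsa]; exact Complex.ofReal_ne_zero.mpr (ne_of_gt (Real.sqrt_pos.mpr hαpos))
    have hso0 : so ≠ 0 := by
      rw [hso]; exact Complex.ofReal_ne_zero.mpr (ne_of_gt (Real.sqrt_pos.mpr hω))
    have hsaR : (starRingEnd ℂ) sa = sa := by rw [hsa]; exact Complex.conj_ofReal _
    have hsoR : (starRingEnd ℂ) so = so := by rw [hso]; exact Complex.conj_ofReal _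
    set u : Fin 2 → ℂ := ![sa / so, (starRingEnd ℂ) b / (sa * so)] with hu
    have hnorm : star u ⬝ᵥ u = 1 := by
      simp only [hu, dotProduct, Fin.sum_univ_two, Pi.star_apply, Matrix.cons_val_zero,
        Matrix.cons_val_one, Matrix.head_cons, Complex.star_def]
      rw [map_div₀, map_div₀, _root_.map_mul, hsaR, hsoR, Complex.conj_conj]
      field_simp
      linear_combination (sa*sa + (α:ℂ) - (ω:ℂ))*hsa2 + hdet2 - (sa*sa)*hso2 + (α:ℂ)*htr2
    refine ⟨u, hnorm, ?_⟩
    have e00 : H 0 0 = ((ω:ℂ) • vecMulVec u (star u)) 0 0 := by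
      simp only [hu, Matrix.smul_apply, Matrix.vecMulVec_apply, Pi.star_apply,
        Matrix.cons_val_zero, smul_eq_mul, Complex.star_def]
      rw [map_div₀, hsaR, hsoR, hH00]
      field_simp
      linear_combination (α:ℂ)*hso2 - (ω:ℂ)*hsa2
    have e01 : H 0 1 = ((ω:ℂ) • vecMulVec u (star u)) 0 1 := by
      simp only [hu, Matrix.smul_apply, Matrix.vecMulVec_apply, Pi.star_apply,
        Matrix.cons_val_zero, Matrix.cons_val_one, Matrix.head_cons, smul_eq_mul,
        Complex.star_def]
      rw [map_div₀, _root_.map_mul, hsaR, hsoR, Complex.conj_conj]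
      field_simp
      linear_combination b*hso2
    have e10 : H 1 0 = ((ω:ℂ) • vecMulVec u (star u)) 1 0 := by
      simp only [hu, Matrix.smul_apply, Matrix.vecMulVec_apply, Pi.star_apply,
        Matrix.cons_val_zero, Matrix.cons_val_one, Matrix.head_cons, smul_eq_mul,
        Complex.star_def]
      rw [map_div₀, hsaR, hsoR, h10]
      field_simp
      linear_combination ((starRingEnd ℂ) b)*hso2
    have e11 : H 1 1 = ((ω:ℂ) • vecMulVec u (star u)) 1 1 := by
      simp only [hu, Matrix.smul_apply, Matrix.vecMulVec_apply, Pi.star_apply,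
        Matrix.cons_val_one, Matrix.head_cons, smul_eq_mul, Complex.star_def, Matrix.cons_val_zero]
      rw [map_div₀, _root_.map_mul, hsaR, hsoR, Complex.conj_conj, hH11]
      field_simp
      linear_combination (γ:ℂ)*(sa*sa)*hso2 + (γ:ℂ)*(ω:ℂ)*hsa2 - (ω:ℂ)*hdet2
    ext i j
    fin_cases i <;> fin_cases j
    exacts [e00, e01, e10, e11]

/-- For a qubit state `σ = p|ψ₀⟩⟨ψ₀| + (1-p)|ψ₁⟩⟨ψ₁|` (`0 ≤ p ≤ 1/2`) and a
positive semidefinite Hamiltonian `H` with eigenvalues `0` and `ω > 0` (encoded by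
`Tr H = ω`, `det H = 0`), the set of attainable works `Tr[(H - V†HV)σ]` over all
unitaries `V` is exactly `[-(1-2p)ε₀, (1-2p)ε₁]`, where `ε_i = ⟨ψ_i|H|ψ_i⟩`; in particular
the maximal extractable work (the ergotropy of `σ`) equals `(1-2p)ε₁`. -/
theorem stmt_10 (ψ : Fin 2 → Fin 2 → ℂ)
    (horth : ∀ i j, star (ψ i) ⬝ᵥ ψ j = if i = j then (1 : ℂ) else 0)
    (p : ℝ) (hp0 : 0 ≤ p) (hp : p ≤ 1 / 2)
    (σ : Matrix (Fin 2) (Fin 2) ℂ)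
    (hσ : σ = (p : ℂ) • vecMulVec (ψ 0) (star (ψ 0))
        + ((1 - p : ℝ) : ℂ) • vecMulVec (ψ 1) (star (ψ 1)))
    (H : Matrix (Fin 2) (Fin 2) ℂ) (hH : H.PosSemidef)
    (ω : ℝ) (hω : 0 < ω) (htr : H.trace = (ω : ℂ)) (hdet : H.det = 0)
    (ε : Fin 2 → ℝ) (hε : ∀ i, star (ψ i) ⬝ᵥ (H *ᵥ ψ i) = (ε i : ℂ)) :
    {w : ℝ | ∃ V ∈ Matrix.unitaryGroup (Fin 2) ℂ,
        ((H - Vᴴ * H * V) * σ).trace = (w : ℂ)}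
      = Set.Icc (-((1 - 2 * p) * ε 0)) ((1 - 2 * p) * ε 1)
    ∧ IsGreatest {w : ℝ | ∃ V ∈ Matrix.unitaryGroup (Fin 2) ℂ,
        ((H - Vᴴ * H * V) * σ).trace = (w : ℂ)} ((1 - 2 * p) * ε 1) := by
  obtain ⟨u, hu, hHu⟩ := rank_one H hH ω hω htr hdet
  have h12p : 0 ≤ 1 - 2 * p := by linarith
  have hcomp : vecMulVec (ψ 0) (star (ψ 0)) + vecMulVec (ψ 1) (star (ψ 1)) = 1 :=
    onb_complete _ _ (by simpa using horth 0 0) (by simpa using horth 1 1)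
      (by simpa using horth 0 1) (by simpa using horth 1 0)
  have hu' : (starRingEnd ℂ) (u 0) * u 0 + (starRingEnd ℂ) (u 1) * u 1 = 1 := by
    simpa [dotProduct, Fin.sum_univ_two, Complex.star_def] using hu
  -- trace of H in the ψ basis
  have hsum : ε 0 + ε 1 = ω := by
    have h1 : H.trace = (ε 0 : ℂ) + (ε 1 : ℂ) := by
      conv_lhs => rw [show H.trace = (H * (vecMulVec (ψ 0) (star (ψ 0))
        + vecMulVec (ψ 1) (star (ψ 1)))).trace by rw [hcomp, mul_one]]
      rw [Matrix.mul_add, Matrix.trace_add, trace_mul_vmv, trace_mul_vmv, hε 0, hε 1]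
    have h2 : ((ε 0 + ε 1 : ℝ) : ℂ) = ((ω : ℝ) : ℂ) := by
      rw [← htr, h1]; push_cast; ring
    exact_mod_cast h2
  -- the key formula for the work as a function of V
  have formula : ∀ V ∈ Matrix.unitaryGroup (Fin 2) ℂ,
      Complex.normSq (star u ⬝ᵥ (V *ᵥ ψ 0)) ≤ 1 ∧
      ((H - Vᴴ * H * V) * σ).trace
        = ((-((1 - 2*p) * ε 0) + ω * (1 - 2*p) * Complex.normSq (star u ⬝ᵥ (V *ᵥ ψ 0)) : ℝ) : ℂ) := by
    intro V hV
    have hVV : V * Vᴴ = 1 := by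
      have h := Matrix.mem_unitaryGroup_iff.mp hV
      rwa [Matrix.star_eq_conjTranspose] at h
    set c0 := star u ⬝ᵥ (V *ᵥ ψ 0) with hc0
    set c1 := star u ⬝ᵥ (V *ᵥ ψ 1) with hc1
    have hq : ∀ i, star (ψ i) ⬝ᵥ ((Vᴴ * H * V) *ᵥ ψ i)
        = (ω:ℂ) * ((starRingEnd ℂ) (star u ⬝ᵥ (V *ᵥ ψ i)) * (star u ⬝ᵥ (V *ᵥ ψ i))) := by
      intro i
      rw [hHu]
      have hs : Vᴴ * ((ω:ℂ) • vecMulVec u (star u)) * V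
          = (ω:ℂ) • (Vᴴ * vecMulVec u (star u) * V) := by
        rw [Matrix.mul_smul, Matrix.smul_mul]
      rw [hs, Matrix.smul_mulVec, dotProduct_smul, smul_eq_mul, sandwich]
    have htrP : (vecMulVec u (star u)).trace = 1 := by
      simp only [Matrix.trace_fin_two, Matrix.vecMulVec_apply, Pi.star_apply, Complex.star_def]
      linear_combination hu'
    have htrc : (Vᴴ * vecMulVec u (star u) * V).trace = 1 := by
      rw [Matrix.trace_mul_cycle, hVV, Matrix.one_mul, htrP]
    have hdecomp : (Vᴴ * vecMulVec u (star u) * V).trace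
        = star (ψ 0) ⬝ᵥ ((Vᴴ * vecMulVec u (star u) * V) *ᵥ ψ 0)
          + star (ψ 1) ⬝ᵥ ((Vᴴ * vecMulVec u (star u) * V) *ᵥ ψ 1) := by
      conv_lhs => rw [show (Vᴴ * vecMulVec u (star u) * V).trace
        = ((Vᴴ * vecMulVec u (star u) * V) * (vecMulVec (ψ 0) (star (ψ 0))
          + vecMulVec (ψ 1) (star (ψ 1)))).trace by rw [hcomp, mul_one]]
      rw [Matrix.mul_add, Matrix.trace_add, trace_mul_vmv, trace_mul_vmv]
    have hpars : (starRingEnd ℂ) c0 * c0 + (starRingEnd ℂ) c1 * c1 = 1 := by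
      rw [hc0, hc1, ← sandwich u (ψ 0) V, ← sandwich u (ψ 1) V, ← hdecomp, htrc]
    have hparsR : Complex.normSq c0 + Complex.normSq c1 = 1 := by
      have h := hpars
      rw [mul_comm _ c0, mul_comm _ c1, Complex.mul_conj, Complex.mul_conj] at h
      exact_mod_cast h
    refine ⟨by nlinarith [Complex.normSq_nonneg c1, Complex.normSq_nonneg c0], ?_⟩
    have expand : ((H - Vᴴ * H * V) * σ).trace
        = (p:ℂ) * (star (ψ 0) ⬝ᵥ ((H - Vᴴ*H*V) *ᵥ ψ 0))
          + ((1-p:ℝ):ℂ) * (star (ψ 1) ⬝ᵥ ((H - Vᴴ*H*V) *ᵥ ψ 1)) := by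
      rw [hσ, Matrix.mul_add, Matrix.trace_add, Matrix.mul_smul, Matrix.mul_smul,
        Matrix.trace_smul, Matrix.trace_smul, trace_mul_vmv, trace_mul_vmv]
      simp [smul_eq_mul]
    have inner : ∀ i, star (ψ i) ⬝ᵥ ((H - Vᴴ*H*V) *ᵥ ψ i)
        = (ε i : ℂ) - (ω:ℂ) * ((Complex.normSq (star u ⬝ᵥ (V *ᵥ ψ i)) : ℝ) : ℂ) := by
      intro i
      rw [Matrix.sub_mulVec, dotProduct_sub, hε i, hq i, mul_comm ((starRingEnd ℂ) _) _,
        Complex.mul_conj]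
    rw [expand, inner 0, inner 1]
    have hsumC : ((ε 0 : ℝ):ℂ) + ((ε 1 : ℝ):ℂ) = ((ω:ℝ):ℂ) := by exact_mod_cast hsum
    have hparsC : ((Complex.normSq c0 : ℝ):ℂ) + ((Complex.normSq c1 : ℝ):ℂ) = 1 := by
      exact_mod_cast hparsR
    push_cast
    linear_combination ((1:ℂ) - (p:ℂ)) * hsumC - ((ω:ℝ):ℂ) * ((1:ℂ) - (p:ℂ)) * hparsC
  -- construction: every t in [0,1] is attained
  have exists_t : ∀ t : ℝ, 0 ≤ t → t ≤ 1 → ∃ V ∈ Matrix.unitaryGroup (Fin 2) ℂ,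
      ((H - Vᴴ * H * V) * σ).trace
        = ((-((1 - 2*p) * ε 0) + ω * (1 - 2*p) * t : ℝ) : ℂ) := by
    intro t ht0 ht1
    set s : ℂ := ((Real.sqrt t : ℝ) : ℂ) with hs
    set r : ℂ := ((Real.sqrt (1 - t) : ℝ) : ℂ) with hr
    have hs2 : s * s = (t : ℂ) := by
      rw [hs]; norm_cast; exact Real.mul_self_sqrt ht0
    have hr2 : r * r = 1 - (t : ℂ) := by
      rw [hr, ← Complex.ofReal_mul, Real.mul_self_sqrt (by linarith)]
      push_cast; ring
    have hsR : (starRingEnd ℂ) s = s := by rw [hs]; exact Complex.conj_ofReal _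
    have hrR : (starRingEnd ℂ) r = r := by rw [hr]; exact Complex.conj_ofReal _
    set up : Fin 2 → ℂ := ![-(starRingEnd ℂ) (u 1), (starRingEnd ℂ) (u 0)] with hup
    set a : Fin 2 → ℂ := fun k => s * u k + r * up k with ha
    set b : Fin 2 → ℂ := fun k => r * u k - s * up k with hb
    have haa : star a ⬝ᵥ a = 1 := by
      simp only [ha, hup, dotProduct, Fin.sum_univ_two, Pi.star_apply, Complex.star_def,
        map_add, _root_.map_mul, map_neg, hsR, hrR, Complex.conj_conj,
        Matrix.cons_val_zero, Matrix.cons_val_one, Matrix.head_cons]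
      linear_combination (s*s + r*r) * hu' + hs2 + hr2
    have hbb : star b ⬝ᵥ b = 1 := by
      simp only [hb, hup, dotProduct, Fin.sum_univ_two, Pi.star_apply, Complex.star_def,
        map_sub, _root_.map_mul, map_neg, hsR, hrR, Complex.conj_conj,
        Matrix.cons_val_zero, Matrix.cons_val_one, Matrix.head_cons]
      linear_combination (s*s + r*r) * hu' + hs2 + hr2
    have hab : star a ⬝ᵥ b = 0 := by
      simp only [ha, hb, hup, dotProduct, Fin.sum_univ_two, Pi.star_apply, Complex.star_def,
        map_add, map_sub, _root_.map_mul, map_neg, hsR, hrR, Complex.conj_conj,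
        Matrix.cons_val_zero, Matrix.cons_val_one, Matrix.head_cons]
      ring
    have hba : star b ⬝ᵥ a = 0 := by
      simp only [ha, hb, hup, dotProduct, Fin.sum_univ_two, Pi.star_apply, Complex.star_def,
        map_add, map_sub, _root_.map_mul, map_neg, hsR, hrR, Complex.conj_conj,
        Matrix.cons_val_zero, Matrix.cons_val_one, Matrix.head_cons]
      ring
    set V : Matrix (Fin 2) (Fin 2) ℂ :=
      vecMulVec a (star (ψ 0)) + vecMulVec b (star (ψ 1)) with hV
    have hVct : Vᴴ = vecMulVec (ψ 0) (star a) + vecMulVec (ψ 1) (star b) := by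
      rw [hV, Matrix.conjTranspose_add, vmv_ct, vmv_ct, star_star, star_star]
    have hVVh : V * Vᴴ = 1 := by
      rw [hVct, hV, Matrix.add_mul, Matrix.mul_add, Matrix.mul_add,
        vmv_mul_vmv, vmv_mul_vmv, vmv_mul_vmv, vmv_mul_vmv]
      rw [show star (ψ 0) ⬝ᵥ ψ 0 = 1 by simpa using horth 0 0,
        show star (ψ 0) ⬝ᵥ ψ 1 = 0 by simpa using horth 0 1,
        show star (ψ 1) ⬝ᵥ ψ 0 = 0 by simpa using horth 1 0,
        show star (ψ 1) ⬝ᵥ ψ 1 = 1 by simpa using horth 1 1]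
      simp only [one_smul, zero_smul, add_zero, zero_add]
      exact onb_complete a b haa hbb hab hba
    have hVmem : V ∈ Matrix.unitaryGroup (Fin 2) ℂ := by
      rw [Matrix.mem_unitaryGroup_iff, Matrix.star_eq_conjTranspose]
      exact hVVh
    have hVψ0 : V *ᵥ ψ 0 = a := by
      rw [hV, Matrix.add_mulVec, vmv_mulVec, vmv_mulVec,
        show star (ψ 0) ⬝ᵥ ψ 0 = 1 by simpa using horth 0 0,
        show star (ψ 1) ⬝ᵥ ψ 0 = 0 by simpa using horth 1 0]
      simp
    have hsua : star u ⬝ᵥ a = s := by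
      simp only [ha, hup, dotProduct, Fin.sum_univ_two, Pi.star_apply, Complex.star_def,
        Matrix.cons_val_zero, Matrix.cons_val_one, Matrix.head_cons]
      linear_combination s * hu'
    have hnsq : Complex.normSq (star u ⬝ᵥ (V *ᵥ ψ 0)) = t := by
      rw [hVψ0, hsua, hs, Complex.normSq_ofReal, Real.mul_self_sqrt ht0]
    refine ⟨V, hVmem, ?_⟩
    rw [(formula V hVmem).2, hnsq]
  -- the set equality
  have hset : {w : ℝ | ∃ V ∈ Matrix.unitaryGroup (Fin 2) ℂ,
      ((H - Vᴴ * H * V) * σ).trace = (w : ℂ)}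
      = Set.Icc (-((1 - 2 * p) * ε 0)) ((1 - 2 * p) * ε 1) := by
    ext w
    simp only [Set.mem_setOf_eq, Set.mem_Icc]
    constructor
    · rintro ⟨V, hV, hw⟩
      obtain ⟨hb1, hval⟩ := formula V hV
      rw [hval] at hw
      have hw' : -((1 - 2*p) * ε 0) + ω * (1 - 2*p) * Complex.normSq (star u ⬝ᵥ (V *ᵥ ψ 0)) = w := by
        exact_mod_cast hw
      have hb0 : (0:ℝ) ≤ Complex.normSq (star u ⬝ᵥ (V *ᵥ ψ 0)) := Complex.normSq_nonneg _
      constructor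
      · nlinarith [mul_nonneg (mul_nonneg hω.le h12p) hb0]
      · nlinarith [mul_nonneg (mul_nonneg hω.le h12p) (sub_nonneg.mpr hb1)]
    · rintro ⟨h1, h2⟩
      by_cases hc : (1 : ℝ) - 2 * p = 0
      · have hw0 : w = 0 := by
          rw [hc] at h1 h2; simp at h1 h2; linarith
        obtain ⟨V, hV, hval⟩ := exists_t 0 le_rfl zero_le_one
        refine ⟨V, hV, ?_⟩
        rw [hval, hw0]
        norm_num [hc]
      · have h12p' : 0 < 1 - 2 * p := lt_of_le_of_ne h12p (Ne.symm hc)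
        set t : ℝ := (w + (1 - 2*p) * ε 0) / (ω * (1 - 2*p)) with htdef
        have hden : 0 < ω * (1 - 2*p) := mul_pos hω h12p'
        have ht0 : 0 ≤ t := div_nonneg (by linarith) hden.le
        have ht1 : t ≤ 1 := by
          rw [htdef, div_le_one hden]
          nlinarith [hsum]
        obtain ⟨V, hV, hval⟩ := exists_t t ht0 ht1
        refine ⟨V, hV, ?_⟩
        rw [hval]
        have hcancel : ω * (1 - 2*p) * t = w + (1 - 2*p) * ε 0 := by
          rw [htdef, mul_div_cancel₀ _ hden.ne']
        norm_cast
        linarith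
  refine ⟨hset, ?_, ?_⟩
  · rw [hset]
    rw [Set.mem_Icc]
    refine ⟨?_, le_refl _⟩
    nlinarith [mul_nonneg h12p hω.le, hsum]
  · intro w hw
    rw [hset, Set.mem_Icc] at hw
    exact hw.2
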